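/- arXiv:2011.01929 — 4 statements merged into one kernel-verified Lean document; each statement's English description precedes it below -/
import Mathlib

section
/- Let A ∈ ℝ^{m×n}, b ∈ ℝⁿ, and ε ≥ 0. Then exactly one of the following two statements holds: (1) there exists x ∈ ℝⁿ with Ax ≤ 0 and ⟪b, x⟫ > ε‖x‖; (2) there exists y ∈ ℝᵐ with y ≥ 0 and ‖Aᵀy - b‖ ≤ ε. (Generalization of Farkas' lemma; for ε = 0 this recovers the usual Farkas lemma.) -/
open Finset Topology RealInnerProductSpace Matrix


lemma cone_cara {m : ℕ} {M : Type*} [AddCommGroup M] [Module ℝ M]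
    (v : Fin m → M) :
    ∀ (k : ℕ) (y : Fin m → ℝ), (univ.filter (fun i => y i ≠ 0)).card ≤ k →
    (∀ i, 0 ≤ y i) →
    ∃ s : Finset (Fin m), (LinearIndependent ℝ (fun i : s => v (i : Fin m))) ∧
      ∃ z : Fin m → ℝ, (∀ i, 0 ≤ z i) ∧ (∀ i, i ∉ s → z i = 0) ∧
        ∑ i, z i • v i = ∑ i, y i • v i := by
  intro k
  induction k with
  | zero =>
    intro y hcard hy
    have hy0 : ∀ i, y i = 0 := by
      intro i
      by_contra h
      have : i ∈ univ.filter (fun i => y i ≠ 0) := by simp [h]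
      have := Finset.card_pos.mpr ⟨i, this⟩
      omega
    refine ⟨∅, linearIndependent_empty_type, y, hy, fun i _ => hy0 i, rfl⟩
  | succ k ih =>
    intro y hcard hy
    set s : Finset (Fin m) := univ.filter (fun i => y i ≠ 0) with hs
    by_cases hind : LinearIndependent ℝ (fun i : s => v (i : Fin m))
    · exact ⟨s, hind, y, hy, fun i hi => by simpa [hs] using hi, rfl⟩
    · obtain ⟨g, hg0, j, hgj⟩ := Fintype.not_linearIndependent_iff.mp hind
      -- extend g to Fin m
      have key : ∀ c : Fin m → ℝ, (∀ i, i ∉ s → c i = 0) → (∑ i, c i • v i = 0) →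
          (∃ i, 0 < c i) →
          ∃ s' : Finset (Fin m), (LinearIndependent ℝ (fun i : s' => v (i : Fin m))) ∧
            ∃ z : Fin m → ℝ, (∀ i, 0 ≤ z i) ∧ (∀ i, i ∉ s' → z i = 0) ∧
              ∑ i, z i • v i = ∑ i, y i • v i := by
        intro c hcs hcsum ⟨i₁, hi₁⟩
        have hP : (univ.filter (fun i => 0 < c i)).Nonempty := ⟨i₁, by simp [hi₁]⟩
        obtain ⟨i₀, hi₀P, hmin⟩ := Finset.exists_min_image _ (fun i => y i / c i) hP
        have hci₀ : 0 < c i₀ := by simpa using hi₀P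
        set t : ℝ := y i₀ / c i₀ with ht
        have ht0 : 0 ≤ t := div_nonneg (hy i₀) hci₀.le
        set z : Fin m → ℝ := fun i => y i - t * c i with hz
        have hz0 : ∀ i, 0 ≤ z i := by
          intro i
          by_cases hci : 0 < c i
          · have := hmin i (by simp [hci])
            have : t * c i ≤ y i := by
              rw [ht]
              calc y i₀ / c i₀ * c i ≤ y i / c i * c i := by
                    exact mul_le_mul_of_nonneg_right this hci.le
                _ = y i := div_mul_cancel₀ _ hci.ne'
            simpa [hz] using this
          · push_neg at hci
            have : t * c i ≤ 0 := mul_nonpos_of_nonneg_of_nonpos ht0 hci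
            have := sub_nonneg.mpr (this.trans (hy i))
            simp only [hz]
            nlinarith [hy i]
        have hzi₀ : z i₀ = 0 := by
          simp only [hz, ht]
          field_simp
          ring
        have hzsupp : univ.filter (fun i => z i ≠ 0) ⊆ s.erase i₀ := by
          intro i hi
          simp only [mem_filter, mem_univ, true_and] at hi
          rw [Finset.mem_erase]
          constructor
          · rintro rfl; exact hi hzi₀
          · by_contra hns
            have hyi : y i = 0 := by
              by_contra h; exact hns (by simp [hs, h])
            have hci : c i = 0 := hcs i hns
            exact hi (by simp [hz, hyi, hci])
        have hi₀s : i₀ ∈ s := by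
          by_contra h
          exact absurd (hcs i₀ h) hci₀.ne'
        have hcard' : (univ.filter (fun i => z i ≠ 0)).card ≤ k := by
          have h1 := Finset.card_le_card hzsupp
          have h2 := Finset.card_erase_of_mem hi₀s
          omega
        have hzsum : ∑ i, z i • v i = ∑ i, y i • v i := by
          simp only [hz, sub_smul, mul_smul, Finset.sum_sub_distrib, ← Finset.smul_sum,
            hcsum, smul_zero, sub_zero]
        obtain ⟨s', h1, z', h2, h3, h4⟩ := ih z hcard' hz0
        exact ⟨s', h1, z', h2, h3, h4.trans hzsum⟩
      set c : Fin m → ℝ := fun i => if h : i ∈ s then g ⟨i, h⟩ else 0 with hc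
      have hcs : ∀ i, i ∉ s → c i = 0 := fun i hi => dif_neg hi
      have hcsum : ∑ i, c i • v i = 0 := by
        rw [← Finset.sum_subset (Finset.subset_univ s) (fun i _ hi => by rw [hcs i hi, zero_smul])]
        rw [← Finset.sum_attach s (fun i => c i • v i)]
        rw [← hg0]
        exact Finset.sum_congr rfl fun i _ => by rw [hc]; simp [i.2]
      by_cases hpos : ∃ i, 0 < c i
      · exact key c hcs hcsum hpos
      · have : ∃ i, 0 < (-c) i := by
          push_neg at hpos
          refine ⟨(j : Fin m), ?_⟩
          have : c (j : Fin m) = g j := by rw [hc]; simp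
          have h2 := hpos (j : Fin m)
          simp only [Pi.neg_apply]
          rcases lt_or_eq_of_le h2 with h | h
          · linarith
          · exact absurd (by rw [← this, h]) hgj
        refine key (-c) (fun i hi => by simp [hcs i hi]) ?_ this
        simp only [Pi.neg_apply, neg_smul, Finset.sum_neg_distrib, hcsum, neg_zero]

lemma cone_isClosed' {m n : ℕ} (v : Fin m → EuclideanSpace ℝ (Fin n)) :
    IsClosed {x : EuclideanSpace ℝ (Fin n) |
      ∃ y : Fin m → ℝ, (∀ i, 0 ≤ y i) ∧ ∑ i, y i • v i = x} := by
  classical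
  set S' : Finset (Fin m) → Set (EuclideanSpace ℝ (Fin n)) := fun s =>
    {x | ∃ y : Fin m → ℝ, (∀ i, 0 ≤ y i) ∧ (∀ i, i ∉ s → y i = 0) ∧ ∑ i, y i • v i = x}
    with hS'
  have hclosed : ∀ s : Finset (Fin m),
      LinearIndependent ℝ (fun i : s => v (i : Fin m)) → IsClosed (S' s) := by
    intro s hind
    set f : (↥s → ℝ) →ₗ[ℝ] EuclideanSpace ℝ (Fin n) :=
      { toFun := fun w => ∑ i : ↥s, w i • v (i : Fin m)
        map_add' := by
          intro a b
          simp [add_smul, Finset.sum_add_distrib]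
        map_smul' := by
          intro r a
          simp [smul_smul, Finset.smul_sum] } with hf
    have hker : LinearMap.ker f = ⊥ := by
      rw [LinearMap.ker_eq_bot']
      intro w hw
      funext i
      exact Fintype.linearIndependent_iff.mp hind w hw i
    have hemb : IsClosedEmbedding f := LinearMap.isClosedEmbedding_of_injective hker
    have hsum : ∀ y : Fin m → ℝ, (∀ i, i ∉ s → y i = 0) →
        ∑ i : ↥s, y (i : Fin m) • v (i : Fin m) = ∑ i, y i • v i := by
      intro y hys
      rw [Finset.sum_coe_sort s (fun i => y i • v i)]
      refine Finset.sum_subset (Finset.subset_univ s) fun i _ hi => ?_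
      rw [hys i hi, zero_smul]
    have himg : S' s = f '' {w | ∀ i, 0 ≤ w i} := by
      ext x
      constructor
      · rintro ⟨y, hy0, hys, hysum⟩
        refine ⟨fun i => y (i : Fin m), fun i => hy0 _, ?_⟩
        show ∑ i : ↥s, y (i : Fin m) • v (i : Fin m) = x
        rw [hsum y hys, hysum]
      · rintro ⟨w, hw, hwx⟩
        set y : Fin m → ℝ := fun i => if h : i ∈ s then w ⟨i, h⟩ else 0 with hy
        refine ⟨y, ?_, ?_, ?_⟩
        · intro i
          by_cases h : i ∈ s
          · simpa [hy, h] using hw ⟨i, h⟩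
          · simp [hy, h]
        · intro i hi; simp [hy, hi]
        · rw [← hwx, ← hsum y (fun i hi => by simp [hy, hi])]
          show _ = ∑ i : ↥s, w i • v (i : Fin m)
          exact Finset.sum_congr rfl fun i _ => by simp [hy, i.2]
    rw [himg]
    refine hemb.isClosedMap _ ?_
    have : {w : ↥s → ℝ | ∀ i, 0 ≤ w i} = ⋂ i, {w : ↥s → ℝ | 0 ≤ w i} := by
      ext w; simp [Set.mem_iInter]
    rw [this]
    exact isClosed_iInter fun i => isClosed_le continuous_const (continuous_apply i)
  have hunion : {x : EuclideanSpace ℝ (Fin n) |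
        ∃ y : Fin m → ℝ, (∀ i, 0 ≤ y i) ∧ ∑ i, y i • v i = x} =
      ⋃ s : Finset (Fin m),
        (if LinearIndependent ℝ (fun i : s => v (i : Fin m)) then S' s else {0}) := by
    ext x
    simp only [Set.mem_iUnion, Set.mem_setOf_eq]
    constructor
    · rintro ⟨y, hy0, hysum⟩
      obtain ⟨s, hind, z, hz0, hzs, hzsum⟩ := cone_cara v _ y le_rfl hy0
      exact ⟨s, by rw [if_pos hind]; exact ⟨z, hz0, hzs, hzsum.trans hysum⟩⟩
    · rintro ⟨s, hx⟩
      by_cases hind : LinearIndependent ℝ (fun i : s => v (i : Fin m))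
      · rw [if_pos hind] at hx
        obtain ⟨y, hy0, _, hysum⟩ := hx
        exact ⟨y, hy0, hysum⟩
      · rw [if_neg hind] at hx
        refine ⟨0, fun i => le_rfl, ?_⟩
        simp only [Set.mem_singleton_iff] at hx
        simp [hx]
  rw [hunion]
  refine isClosed_iUnion_of_finite fun s => ?_
  split
  · exact hclosed s ‹_›
  · exact isClosed_singleton

theorem stmt1 (m n : ℕ) (A : Matrix (Fin m) (Fin n) ℝ)
    (b : EuclideanSpace ℝ (Fin n)) (ε : ℝ) (hε : 0 ≤ ε) :
    Xor'
      (∃ x : EuclideanSpace ℝ (Fin n), (∀ i, A.mulVec x i ≤ 0) ∧ ⟪b, x⟫ > ε * ‖x‖)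
      (∃ y : Fin m → ℝ, (∀ i, 0 ≤ y i) ∧
        ‖(show EuclideanSpace ℝ (Fin n) from WithLp.toLp 2 (Aᵀ.mulVec y)) - b‖ ≤ ε) := by
  classical
  set v : Fin m → EuclideanSpace ℝ (Fin n) := fun i => WithLp.toLp 2 (fun j => A i j) with hv
  have hinner : ∀ a c : EuclideanSpace ℝ (Fin n), ⟪a, c⟫ = ∑ j, a j * c j := by
    intro a c
    simp [PiLp.inner_apply, RCLike.inner_apply, conj_trivial]
    exact Finset.sum_congr rfl fun _ _ => mul_comm _ _
  have hmv : ∀ y : Fin m → ℝ,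
      (show EuclideanSpace ℝ (Fin n) from WithLp.toLp 2 (Aᵀ.mulVec y)) = ∑ i, y i • v i := by
    intro y
    ext j
    simp only [Matrix.mulVec, dotProduct, Matrix.transpose_apply, hv]
    rw [show (∑ i, y i • v i) j = ∑ i, y i * A i j from by
      rw [WithLp.ofLp_sum, Finset.sum_apply]; rfl]
    exact Finset.sum_congr rfl fun i _ => mul_comm _ _
  -- not both
  have hnotboth : ¬((∃ x : EuclideanSpace ℝ (Fin n),
        (∀ i, A.mulVec x i ≤ 0) ∧ ⟪b, x⟫ > ε * ‖x‖) ∧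
      (∃ y : Fin m → ℝ, (∀ i, 0 ≤ y i) ∧
        ‖(show EuclideanSpace ℝ (Fin n) from WithLp.toLp 2 (Aᵀ.mulVec y)) - b‖ ≤ ε)) := by
    rintro ⟨⟨x, hAx, hbx⟩, ⟨y, hy0, hyb⟩⟩
    set p : EuclideanSpace ℝ (Fin n) := WithLp.toLp 2 (Aᵀ.mulVec y) with hp
    have hpx : ⟪p, x⟫ ≤ 0 := by
      rw [hinner]
      have : ∑ j, p j * x j = y ⬝ᵥ (A *ᵥ x) := by
        rw [show ∑ j, p j * x j = (Aᵀ *ᵥ y) ⬝ᵥ (x : Fin n → ℝ) from rfl]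
        rw [Matrix.mulVec_transpose, ← Matrix.dotProduct_mulVec]
      rw [this]
      exact Finset.sum_nonpos fun i _ => mul_nonpos_of_nonneg_of_nonpos (hy0 i) (hAx i)
    have h1 : ⟪p - b, x⟫ = ⟪p, x⟫ - ⟪b, x⟫ := by
      rw [inner_sub_left]
    have h2 : |⟪p - b, x⟫| ≤ ‖p - b‖ * ‖x‖ := abs_real_inner_le_norm _ _
    have h3 : ‖p - b‖ * ‖x‖ ≤ ε * ‖x‖ :=
      mul_le_mul_of_nonneg_right hyb (norm_nonneg x)
    have h4 := (abs_le.mp h2).1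
    linarith
  by_cases hQ : (∃ y : Fin m → ℝ, (∀ i, 0 ≤ y i) ∧
      ‖(show EuclideanSpace ℝ (Fin n) from WithLp.toLp 2 (Aᵀ.mulVec y)) - b‖ ≤ ε)
  · exact Or.inr ⟨hQ, fun hP => hnotboth ⟨hP, hQ⟩⟩
  · refine Or.inl ⟨?_, hQ⟩
    push_neg at hQ
    set K : Set (EuclideanSpace ℝ (Fin n)) :=
      {x | ∃ y : Fin m → ℝ, (∀ i, 0 ≤ y i) ∧ ∑ i, y i • v i = x} with hK
    have hKc : IsClosed K := cone_isClosed' v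
    have hK0 : (0 : EuclideanSpace ℝ (Fin n)) ∈ K := ⟨0, fun i => le_rfl, by simp⟩
    have hKconv : Convex ℝ K := by
      rintro x1 ⟨y1, hy1, rfl⟩ x2 ⟨y2, hy2, rfl⟩ a c ha hc hac
      refine ⟨fun i => a * y1 i + c * y2 i,
        fun i => add_nonneg (mul_nonneg ha (hy1 i)) (mul_nonneg hc (hy2 i)), ?_⟩
      simp only [add_smul, Finset.sum_add_distrib, Finset.smul_sum, smul_smul]
    have hKadd : ∀ x1 ∈ K, ∀ x2 ∈ K, x1 + x2 ∈ K := by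
      rintro x1 ⟨y1, hy1, rfl⟩ x2 ⟨y2, hy2, rfl⟩
      refine ⟨fun i => y1 i + y2 i, fun i => add_nonneg (hy1 i) (hy2 i), ?_⟩
      simp [add_smul, Finset.sum_add_distrib]
    have hvK : ∀ i, v i ∈ K := by
      intro i
      refine ⟨fun i' => if i' = i then 1 else 0,
        fun i' => by dsimp only; split <;> norm_num, ?_⟩
      simp [ite_smul]
    obtain ⟨p, hpK, hpmin⟩ :=
      exists_norm_eq_iInf_of_complete_convex ⟨0, hK0⟩ hKc.isComplete hKconv b
    have hchar := (norm_eq_iInf_iff_real_inner_le_zero hKconv hpK).mp hpmin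
    set x : EuclideanSpace ℝ (Fin n) := b - p with hx
    -- ⟪x, p⟫ = 0
    have hxp : ⟪x, p⟫ = 0 := by
      have h0 := hchar 0 hK0
      have h2 := hchar (p + p) (hKadd p hpK p hpK)
      rw [zero_sub, inner_neg_right] at h0
      rw [add_sub_cancel_right] at h2
      linarith
    have hxk : ∀ w ∈ K, ⟪x, w⟫ ≤ 0 := by
      intro w hw
      have := hchar (p + w) (hKadd p hpK w hw)
      rwa [add_sub_cancel_left] at this
    have hAx : ∀ i, A.mulVec x i ≤ 0 := by
      intro i
      have h := hxk (v i) (hvK i)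
      rw [real_inner_comm, hinner] at h
      calc A.mulVec x i = ∑ j, A i j * x j := rfl
        _ = ∑ j, (v i) j * x j := rfl
        _ ≤ 0 := h
    have hεx : ε < ‖x‖ := by
      obtain ⟨y0, hy00, hy0sum⟩ := hpK
      have := hQ y0 hy00
      rw [hmv y0, hy0sum] at this
      calc ε < ‖p - b‖ := this
        _ = ‖x‖ := by rw [hx, norm_sub_rev]
    refine ⟨x, hAx, ?_⟩
    have hb : b = p + x := by rw [hx]; abel
    have : ⟪b, x⟫ = ⟪p, x⟫ + ⟪x, x⟫ := by
      rw [hb, inner_add_left]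
    have hpx0 : ⟪p, x⟫ = (0:ℝ) := (real_inner_comm x p).trans hxp
    rw [this, hpx0, zero_add, real_inner_self_eq_norm_mul_norm]
    have hx0 : 0 < ‖x‖ := lt_of_le_of_lt hε hεx
    exact mul_lt_mul_of_pos_right hεx hx0
end

section
/- Let D = {x ∈ ℝⁿ : Ax ≤ b} be a non-empty bounded polytope, f : ℝⁿ → ℝ continuously differentiable, η > 0, ε' > 0, and ε = η·ε'. Suppose x ∈ D is an ε'-KKT point, i.e., there exists μ ∈ ℝᵐ with μ ≥ 0, ⟪μ, Ax - b⟫ = 0, and ‖∇f(x) + Aᵀμ‖ ≤ ε'. Then, letting y = Π_D(x - η∇f(x)), we have ‖x - y‖ ≤ ε. -/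
open RealInnerProductSpace Matrix

theorem stmt5 (m n : ℕ) (A : Matrix (Fin m) (Fin n) ℝ) (b : Fin m → ℝ)
    (D : Set (EuclideanSpace ℝ (Fin n)))
    (hD : D = {x : EuclideanSpace ℝ (Fin n) | ∀ i, A.mulVec x i ≤ b i})
    (hne : D.Nonempty) (hbdd : Bornology.IsBounded D)
    (f : EuclideanSpace ℝ (Fin n) → ℝ)
    (f' : EuclideanSpace ℝ (Fin n) → EuclideanSpace ℝ (Fin n))
    (hf : ∀ z, HasGradientAt f (f' z) z) (hf'c : Continuous f')
    (η ε' ε : ℝ) (hη : 0 < η) (hε' : 0 < ε') (hε : ε = η * ε')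
    (x : EuclideanSpace ℝ (Fin n)) (hx : x ∈ D)
    (μ : Fin m → ℝ) (hμ : ∀ i, 0 ≤ μ i)
    (hcomp : μ ⬝ᵥ (A.mulVec x - b) = 0)
    (hkkt : ‖f' x + (show EuclideanSpace ℝ (Fin n) from WithLp.toLp 2 (Aᵀ.mulVec μ))‖ ≤ ε')
    (y : EuclideanSpace ℝ (Fin n)) (hy : y ∈ D)
    (hproj : ∀ z ∈ D, ‖(x - η • f' x) - y‖ ≤ ‖(x - η • f' x) - z‖) :
    ‖x - y‖ ≤ ε := by
  have hconv : Convex ℝ D := by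
    rw [hD]
    intro p hp q hq a c ha hc hac
    intro i
    have heq : A.mulVec (a • p + c • q) i = a * A.mulVec p i + c * A.mulVec q i := by
      simp only [Matrix.mulVec, dotProduct, PiLp.add_apply, PiLp.smul_apply, Pi.add_apply, Pi.smul_apply,
        smul_eq_mul, Finset.mul_sum]
      rw [← Finset.sum_add_distrib]
      congr 1; ext j; ring
    rw [WithLp.ofLp_add, WithLp.ofLp_smul, WithLp.ofLp_smul, heq]
    calc a * A.mulVec p i + c * A.mulVec q i ≤ a * b i + c * b i := by
          gcongr <;> [exact hp i; exact hq i]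
      _ = b i := by rw [← add_mul, hac, one_mul]
  set u := x - η • f' x with hu
  have hinf : ‖u - y‖ = ⨅ w : D, ‖u - w‖ := by
    haveI : Nonempty D := ⟨⟨y, hy⟩⟩
    apply le_antisymm
    · exact le_ciInf fun w => hproj w w.2
    · have hbb : BddBelow (Set.range fun w : D => ‖u - ↑w‖) := by
        refine ⟨0, ?_⟩
        rintro _ ⟨w, rfl⟩
        exact norm_nonneg _
      exact ciInf_le hbb ⟨y, hy⟩
  have hvar : ⟪u - y, x - y⟫ ≤ 0 :=
    ((norm_eq_iInf_iff_real_inner_le_zero hconv hy).mp hinf) x hx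
  -- inner (Aᵀμ) (x - y) = μ ⬝ᵥ A *ᵥ (x - y)
  have hAT : ∀ w : EuclideanSpace ℝ (Fin n),
      ⟪(show EuclideanSpace ℝ (Fin n) from WithLp.toLp 2 (Aᵀ.mulVec μ)), w⟫ = μ ⬝ᵥ A.mulVec w := by
    intro w
    simp only [PiLp.inner_apply, RCLike.inner_apply, conj_trivial, Matrix.mulVec,
      dotProduct, Matrix.transpose_apply, Finset.sum_mul, Finset.mul_sum]
    rw [Finset.sum_comm]
    congr 1; ext i; congr 1; ext j; ring
  have hnn : 0 ≤ ⟪(show EuclideanSpace ℝ (Fin n) from WithLp.toLp 2 (Aᵀ.mulVec μ)), x - y⟫ := by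
    rw [hAT]
    have : A.mulVec (x - y) = (A.mulVec x - b) + (b - A.mulVec y) := by
      rw [Matrix.mulVec_sub]; abel
    rw [WithLp.ofLp_sub, this, dotProduct_add, hcomp, zero_add]
    apply Finset.sum_nonneg
    intro i _
    have hyb : A.mulVec y i ≤ b i := by rw [hD] at hy; exact hy i
    exact mul_nonneg (hμ i) (by simpa using sub_nonneg.mpr hyb)
  have key : ‖x - y‖ ^ 2 ≤ η * ε' * ‖x - y‖ := by
    have h1 : ⟪x - y, x - y⟫ ≤ η * ⟪f' x, x - y⟫ := by
      have : u - y = (x - y) - η • f' x := by rw [hu]; abel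
      rw [this, inner_sub_left, real_inner_smul_left] at hvar
      linarith
    have h2 : ⟪f' x, x - y⟫ ≤ ε' * ‖x - y‖ := by
      have := real_inner_le_norm (f' x + (show EuclideanSpace ℝ (Fin n) from WithLp.toLp 2 (Aᵀ.mulVec μ))) (x - y)
      rw [inner_add_left] at this
      have hb := mul_le_mul_of_nonneg_right hkkt (norm_nonneg (x - y))
      nlinarith [hnn]
    calc ‖x - y‖ ^ 2 = ⟪x - y, x - y⟫ := (real_inner_self_eq_norm_sq _).symm
      _ ≤ η * ⟪f' x, x - y⟫ := h1
      _ ≤ η * (ε' * ‖x - y‖) := by exact mul_le_mul_of_nonneg_left h2 hη.le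
      _ = η * ε' * ‖x - y‖ := by ring
  rw [hε]
  rcases eq_or_lt_of_le (norm_nonneg (x - y)) with h0 | h0
  · rw [← h0]; positivity
  · nlinarith [key]
end

section
/- Let D ⊆ ℝⁿ be non-empty, closed and convex, f : ℝⁿ → ℝ continuously differentiable with ∇f L-Lipschitz on D (L > 0), let η = 1/L and let x ∈ D with y = Π_D(x - η∇f(x)). If f(y) ≥ f(x) - ε' where ε' = ε²/(8L), then ‖x - y‖ ≤ ε/(2L). -/
open RealInnerProductSpace
set_option maxHeartbeats 1000000 in

theorem stmt6 (n : ℕ) (D : Set (EuclideanSpace ℝ (Fin n))) (hne : D.Nonempty)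
    (hcl : IsClosed D) (hconv : Convex ℝ D)
    (f : EuclideanSpace ℝ (Fin n) → ℝ)
    (f' : EuclideanSpace ℝ (Fin n) → EuclideanSpace ℝ (Fin n))
    (hf : ∀ z, HasGradientAt f (f' z) z) (hf'c : Continuous f')
    (L : ℝ) (hL : 0 < L)
    (hLip : ∀ u ∈ D, ∀ v ∈ D, ‖f' u - f' v‖ ≤ L * ‖u - v‖)
    (η ε ε' : ℝ) (hη : η = 1 / L) (hεpos : 0 < ε) (hε' : ε' = ε ^ 2 / (8 * L))
    (x : EuclideanSpace ℝ (Fin n)) (hx : x ∈ D)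
    (y : EuclideanSpace ℝ (Fin n)) (hyD : y ∈ D)
    (hproj : ∀ z ∈ D, ‖(x - η • f' x) - y‖ ≤ ‖(x - η • f' x) - z‖)
    (hdec : f y ≥ f x - ε') :
    ‖x - y‖ ≤ ε / (2 * L) := by
  set g := y - x with hg
  -- curve derivative
  have hcurve : ∀ t : ℝ, HasDerivAt (fun t : ℝ => x + t • g) g t := by
    intro t
    simpa using (((hasDerivAt_id t).smul_const g).const_add x)
  have hφ : ∀ t : ℝ, HasDerivAt (fun t : ℝ => f (x + t • g)) ⟪f' (x + t • g), g⟫ t := by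
    intro t
    have := ((hf (x + t • g)).hasFDerivAt.comp_hasDerivAt t (hcurve t))
    simpa [InnerProductSpace.toDual_apply_apply, Function.comp_def] using this
  have hcont : Continuous fun t : ℝ => ⟪f' (x + t • g), g⟫ := by
    exact (hf'c.comp (by continuity)).inner continuous_const
  have hkey : f y - f x = ∫ t in (0:ℝ)..1, ⟪f' (x + t • g), g⟫ := by
    have h := intervalIntegral.integral_eq_sub_of_hasDerivAt (f := fun t : ℝ => f (x + t • g))
      (f' := fun t : ℝ => ⟪f' (x + t • g), g⟫) (a := 0) (b := 1)
      (fun t _ => hφ t) (hcont.intervalIntegrable 0 1)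
    simpa [hg] using h.symm
  -- pointwise bound
  have hb : ∀ t ∈ Set.Icc (0:ℝ) 1, ⟪f' (x + t • g), g⟫ ≤ ⟪f' x, g⟫ + L * t * ‖g‖ ^ 2 := by
    intro t ht
    have hmem : x + t • g ∈ D := hconv.add_smul_sub_mem hx hyD ht
    have h1 : ⟪f' (x + t • g) - f' x, g⟫ ≤ ‖f' (x + t • g) - f' x‖ * ‖g‖ :=
      real_inner_le_norm _ _
    have h2 : ‖f' (x + t • g) - f' x‖ ≤ L * (t * ‖g‖) := by
      have := hLip _ hmem _ hx
      simpa [norm_smul, abs_of_nonneg ht.1] using this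
    have h3 : ⟪f' (x + t • g) - f' x, g⟫ ≤ L * (t * ‖g‖) * ‖g‖ :=
      h1.trans (by nlinarith [norm_nonneg g])
    rw [inner_sub_left] at h3
    nlinarith [h3]
  have hcont2 : Continuous fun t : ℝ => ⟪f' x, g⟫ + L * t * ‖g‖ ^ 2 :=
    continuous_const.add (((continuous_const.mul continuous_id).mul continuous_const))
  have hint : (∫ t in (0:ℝ)..1, ⟪f' (x + t • g), g⟫) ≤
      ∫ t in (0:ℝ)..1, (⟪f' x, g⟫ + L * t * ‖g‖ ^ 2) := by
    apply intervalIntegral.integral_mono_on (by norm_num)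
      (hcont.intervalIntegrable 0 1) (hcont2.intervalIntegrable 0 1)
    exact hb
  have hval : (∫ t in (0:ℝ)..1, (⟪f' x, g⟫ + L * t * ‖g‖ ^ 2)) =
      ⟪f' x, g⟫ + L / 2 * ‖g‖ ^ 2 := by
    have : ∀ t : ℝ, ⟪f' x, g⟫ + L * t * ‖g‖ ^ 2 = ⟪f' x, g⟫ + (L * ‖g‖ ^ 2) * t := by
      intro t; ring
    have hI : IntervalIntegrable (fun t : ℝ => (L * ‖g‖ ^ 2) * t) MeasureTheory.volume 0 1 :=
      (continuous_const.mul continuous_id').intervalIntegrable 0 1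
    simp only [this]
    rw [intervalIntegral.integral_add intervalIntegrable_const hI,
      intervalIntegral.integral_const_mul, integral_id]
    simp
    ring
  have hdesc : f y - f x ≤ ⟪f' x, g⟫ + L / 2 * ‖g‖ ^ 2 := by
    rw [hkey]; exact hint.trans (le_of_eq hval)
  -- projection variational inequality
  have hvar : ⟪(x - η • f' x) - y, x - y⟫ ≤ 0 := by
    haveI : Nonempty D := hne.to_subtype
    have hbdd : BddBelow (Set.range fun w : D =>
        ‖(x - η • f' x) - (w : EuclideanSpace ℝ (Fin n))‖) :=
      ⟨0, by rintro r ⟨w, rfl⟩; exact norm_nonneg _⟩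
    have hinf : ‖(x - η • f' x) - y‖ = ⨅ w : D, ‖(x - η • f' x) - w‖ :=
      le_antisymm (le_ciInf fun w => hproj w w.2) (ciInf_le hbdd ⟨y, hyD⟩)
    exact (norm_eq_iInf_iff_real_inner_le_zero hconv hyD).mp hinf x hx
  have hexp : ⟪(x - η • f' x) - y, x - y⟫ = ‖x - y‖ ^ 2 - η * ⟪f' x, x - y⟫ := by
    have : (x - η • f' x) - y = (x - y) - η • f' x := by abel
    rw [this, inner_sub_left, real_inner_smul_left, real_inner_self_eq_norm_sq]
  have hinner : ⟪f' x, g⟫ ≤ -(L * ‖g‖ ^ 2) := by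
    rw [hexp] at hvar
    have hηpos : 0 < η := by rw [hη]; positivity
    have h5 : ‖x - y‖ ^ 2 ≤ η * ⟪f' x, x - y⟫ := by linarith
    have h6 : ⟪f' x, x - y⟫ = -⟪f' x, g⟫ := by
      rw [hg, ← inner_neg_right]; congr 1; abel
    have h7 : ‖x - y‖ = ‖g‖ := by rw [hg, norm_sub_rev]
    rw [h6, h7] at h5
    have hL' : (1:ℝ)/L * L = 1 := by field_simp
    rw [hη] at h5
    nlinarith [mul_le_mul_of_nonneg_left h5 hL.le]
  -- combine
  have hfin : L / 2 * ‖g‖ ^ 2 ≤ ε' := by nlinarith [hdesc, hinner]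
  have h7 : ‖x - y‖ = ‖g‖ := by rw [hg, norm_sub_rev]
  rw [h7]
  have hsq : ‖g‖ ^ 2 ≤ (ε / (2 * L)) ^ 2 := by
    rw [div_pow, le_div_iff₀ (by positivity)]
    have h8 : ε ^ 2 / (8 * L) * (8 * L) = ε ^ 2 := by field_simp
    nlinarith [mul_le_mul_of_nonneg_right hfin (by positivity : (0:ℝ) ≤ 8 * L), h8, hL]
  calc ‖g‖ = Real.sqrt (‖g‖ ^ 2) := (Real.sqrt_sq (norm_nonneg g)).symm
    _ ≤ Real.sqrt ((ε / (2 * L)) ^ 2) := Real.sqrt_le_sqrt hsq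
    _ = ε / (2 * L) := Real.sqrt_sq (by positivity)
end

section
/- Let D ⊆ ℝⁿ be non-empty, closed and convex, f : ℝⁿ → ℝ continuously differentiable, η > 0, x ∈ D and y = Π_D(x - η∇f(x)). If moreover ‖x - y‖ ≤ ε/(2L) (with L, ε > 0 and η = 1/L) and ‖∇f(x) - ∇f(y)‖ ≤ L‖x - y‖, then for all z ∈ D: ⟪-∇f(y), z - y⟫ ≤ ε‖z - y‖. -/
open RealInnerProductSpace

theorem stmt7 (n : ℕ) (D : Set (EuclideanSpace ℝ (Fin n))) (hne : D.Nonempty)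
    (hcl : IsClosed D) (hconv : Convex ℝ D)
    (f : EuclideanSpace ℝ (Fin n) → ℝ)
    (f' : EuclideanSpace ℝ (Fin n) → EuclideanSpace ℝ (Fin n))
    (hf : ∀ z, HasGradientAt f (f' z) z) (hf'c : Continuous f')
    (L ε η : ℝ) (hL : 0 < L) (hεpos : 0 < ε) (hη : η = 1 / L)
    (x : EuclideanSpace ℝ (Fin n)) (hx : x ∈ D)
    (y : EuclideanSpace ℝ (Fin n)) (hyD : y ∈ D)
    (hproj : ∀ z ∈ D, ‖(x - η • f' x) - y‖ ≤ ‖(x - η • f' x) - z‖)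
    (hxy : ‖x - y‖ ≤ ε / (2 * L))
    (hLipxy : ‖f' x - f' y‖ ≤ L * ‖x - y‖) :
    ∀ z ∈ D, ⟪-f' y, z - y⟫ ≤ ε * ‖z - y‖ := by
  intro z hz
  set p := x - η • f' x with hp
  have hηpos : 0 < η := by rw [hη]; positivity
  -- variational inequality
  have hvar : ∀ w ∈ D, ⟪p - y, w - y⟫ ≤ 0 := by
    rw [← norm_eq_iInf_iff_real_inner_le_zero hconv hyD]
    haveI : Nonempty D := ⟨⟨y, hyD⟩⟩
    refine le_antisymm ?_ ?_
    · exact le_ciInf fun w => hproj w w.2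
    · exact ciInf_le ⟨0, fun b hb => by obtain ⟨w, rfl⟩ := hb; positivity⟩ (⟨y, hyD⟩ : D)
  have h1 : ⟪p - y, z - y⟫ ≤ 0 := hvar z hz
  have hexp : ⟪p - y, z - y⟫ = ⟪x - y, z - y⟫ + η * ⟪-f' x, z - y⟫ := by
    rw [hp]
    rw [show x - η • f' x - y = (x - y) + η • (-f' x) by rw [smul_neg]; abel]
    rw [inner_add_left, real_inner_smul_left]
  have h2 : ⟪-f' x, z - y⟫ ≤ (1 / η) * ⟪y - x, z - y⟫ := by
    have := h1
    rw [hexp] at this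
    have : η * ⟪-f' x, z - y⟫ ≤ ⟪y - x, z - y⟫ := by
      have hyx : ⟪y - x, z - y⟫ = -⟪x - y, z - y⟫ := by
        rw [show y - x = -(x - y) by abel, inner_neg_left]
      linarith
    calc ⟪-f' x, z - y⟫ = (1 / η) * (η * ⟪-f' x, z - y⟫) := by
          field_simp
      _ ≤ (1 / η) * ⟪y - x, z - y⟫ := by
          apply mul_le_mul_of_nonneg_left this; positivity
  have hcs : ⟪y - x, z - y⟫ ≤ ‖x - y‖ * ‖z - y‖ := by
    calc ⟪y - x, z - y⟫ ≤ ‖y - x‖ * ‖z - y‖ := real_inner_le_norm _ _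
      _ = ‖x - y‖ * ‖z - y‖ := by rw [norm_sub_rev]
  have h3 : ⟪-f' x, z - y⟫ ≤ (ε / 2) * ‖z - y‖ := by
    have h1η : 1 / η = L := by rw [hη]; field_simp
    calc ⟪-f' x, z - y⟫ ≤ (1 / η) * ⟪y - x, z - y⟫ := h2
      _ = L * ⟪y - x, z - y⟫ := by rw [h1η]
      _ ≤ L * (‖x - y‖ * ‖z - y‖) := by
          apply mul_le_mul_of_nonneg_left hcs hL.le
      _ ≤ L * ((ε / (2 * L)) * ‖z - y‖) := by
          apply mul_le_mul_of_nonneg_left _ hL.le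
          exact mul_le_mul_of_nonneg_right hxy (norm_nonneg _)
      _ = (ε / 2) * ‖z - y‖ := by field_simp
  have h4 : ⟪f' x - f' y, z - y⟫ ≤ (ε / 2) * ‖z - y‖ := by
    calc ⟪f' x - f' y, z - y⟫ ≤ ‖f' x - f' y‖ * ‖z - y‖ := real_inner_le_norm _ _
      _ ≤ (L * ‖x - y‖) * ‖z - y‖ :=
          mul_le_mul_of_nonneg_right hLipxy (norm_nonneg _)
      _ ≤ (L * (ε / (2 * L))) * ‖z - y‖ := by
          apply mul_le_mul_of_nonneg_right _ (norm_nonneg _)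
          exact mul_le_mul_of_nonneg_left hxy hL.le
      _ = (ε / 2) * ‖z - y‖ := by field_simp
  have hsplit : ⟪-f' y, z - y⟫ = ⟪-f' x, z - y⟫ + ⟪f' x - f' y, z - y⟫ := by
    rw [← inner_add_left]; congr 1; abel
  rw [hsplit]; linarith
end
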